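/- Let N ≥ 0, let (λ_i) and (λ̂_i) be as defined from the Thue–Morse sequence (λ_{3k+1}=τ_{2k+1}+N, λ_{3k+2}=N, λ_{3k+3}=τ_{2k+2}+N; λ̂ is the same with τ replaced by 1−τ). Then for every n ≥ 0 and every 0 ≤ i < 3·2ⁿ: λ̂₁⋯λ̂_{3·2ⁿ−i} ≼ λ̂_{i+1}⋯λ̂_{3·2ⁿ} ≺ λ₁⋯λ_{3·2ⁿ−i}. -/

import Mathlib

namespace TMAux

/- `Aw n` is the λ-bit word of length `3·2^n`; `Bw` the λ̂-bit word;
`Mw n = Aw n` with last letter set to 0; `Pw n = Bw n` with last letter set to 1. -/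
mutual
def Aw : ℕ → List ℕ
  | 0 => [1,0,1]
  | n+1 => Aw n ++ Pw n
def Bw : ℕ → List ℕ
  | 0 => [0,0,0]
  | n+1 => Bw n ++ Mw n
def Mw : ℕ → List ℕ
  | 0 => [1,0,0]
  | n+1 => Aw n ++ Bw n
def Pw : ℕ → List ℕ
  | 0 => [0,0,1]
  | n+1 => Bw n ++ Aw n
end

lemma lengths (n : ℕ) : (Aw n).length = 3*2^n ∧ (Bw n).length = 3*2^n
    ∧ (Mw n).length = 3*2^n ∧ (Pw n).length = 3*2^n := by
  induction n with
  | zero => simp [Aw, Bw, Mw, Pw]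
  | succ n ih =>
    obtain ⟨hA, hB, hM, hP⟩ := ih
    have h2 : 3*2^(n+1) = 3*2^n + 3*2^n := by ring
    simp [Aw, Bw, Mw, Pw, hA, hB, hM, hP, h2]

lemma struct (n : ℕ) : ∃ l m : List ℕ,
    Aw n = l ++ [1] ∧ Mw n = l ++ [0] ∧ Pw n = m ++ [1] ∧ Bw n = m ++ [0] := by
  induction n with
  | zero => exact ⟨[1,0], [0,0], rfl, rfl, rfl, rfl⟩
  | succ n ih =>
    obtain ⟨l, m, hA, hM, hP, hB⟩ := ih
    refine ⟨Aw n ++ m, Bw n ++ l, ?_, ?_, ?_, ?_⟩ <;>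
      simp [Aw, Bw, Mw, Pw, hA, hM, hP, hB]

/-- Strict lex on heads of equal length transfers to appended lists. -/
lemma lex_append_of_lex {u v s t : List ℕ} (h : List.Lex (·<·) u v)
    (hl : u.length = v.length) : List.Lex (·<·) (u ++ s) (v ++ t) := by
  induction h with
  | nil => simp at hl
  | @cons a l₁ l₂ h ih => exact List.Lex.cons (ih (by simpa using hl))
  | rel h => exact List.Lex.rel h

lemma lex_append_left {s t : List ℕ} (u : List ℕ) (h : List.Lex (·<·) s t) :
    List.Lex (·<·) (u ++ s) (u ++ t) := by
  induction u with
  | nil => simpa using h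
  | cons a u ih => exact List.Lex.cons ih

abbrev LeL (u v : List ℕ) : Prop := List.Lex (·<·) u v ∨ u = v

lemma le_append {u v s t : List ℕ} (hl : u.length = v.length)
    (h : LeL u v) (h' : LeL s t) : LeL (u ++ s) (v ++ t) := by
  rcases h with h | rfl
  · exact Or.inl (lex_append_of_lex h hl)
  · rcases h' with h' | rfl
    · exact Or.inl (lex_append_left u h')
    · exact Or.inr rfl

lemma lt_of_le_append_lt {u v s t : List ℕ} (hl : u.length = v.length)
    (h : LeL u v) (h' : List.Lex (·<·) s t) : List.Lex (·<·) (u ++ s) (v ++ t) := by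
  rcases h with h | rfl
  · exact lex_append_of_lex h hl
  · exact lex_append_left u h'

lemma lt_snoc (l : List ℕ) : List.Lex (·<·) (l ++ [0]) (l ++ [1]) :=
  lex_append_left l (List.Lex.rel (by norm_num))

end TMAux
namespace TMAux

lemma invariant (n : ℕ) : ∀ i < 3*2^n,
    List.Lex (·<·) ((Bw n).drop i) ((Aw n).take (3*2^n - i)) ∧
    LeL ((Bw n).take (3*2^n - i)) ((Bw n).drop i) ∧
    LeL ((Aw n).drop i) ((Aw n).take (3*2^n - i)) ∧
    List.Lex (·<·) ((Bw n).take (3*2^n - i)) ((Aw n).drop i) ∧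
    List.Lex (·<·) ((Mw n).drop i) ((Aw n).take (3*2^n - i)) ∧
    LeL ((Bw n).take (3*2^n - i)) ((Mw n).drop i) ∧
    LeL ((Pw n).drop i) ((Aw n).take (3*2^n - i)) ∧
    List.Lex (·<·) ((Bw n).take (3*2^n - i)) ((Pw n).drop i) := by
  induction n with
  | zero =>
    intro i hi
    norm_num at hi
    interval_cases i <;> exact ⟨by decide, by decide, by decide, by decide,
      by decide, by decide, by decide, by decide⟩
  | succ n ih =>
    intro i hi
    obtain ⟨hA, hB, hM, hP⟩ := lengths n
    obtain ⟨l, m, sA, sM, sP, sB⟩ := struct n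
    have hpow : 3*2^(n+1) = 3*2^n + 3*2^n := by ring
    have AwS : Aw (n+1) = Aw n ++ Pw n := by rw [Aw]
    have BwS : Bw (n+1) = Bw n ++ Mw n := by rw [Bw]
    have MwS : Mw (n+1) = Aw n ++ Bw n := by rw [Mw]
    have PwS : Pw (n+1) = Bw n ++ Aw n := by rw [Pw]
    have ltBP : List.Lex (·<·) (Bw n) (Pw n) := by rw [sB, sP]; exact lt_snoc m
    have ltMA : List.Lex (·<·) (Mw n) (Aw n) := by rw [sM, sA]; exact lt_snoc l
    have hlen_l : l.length = 3*2^n - 1 := by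
      have h := hA; rw [sA] at h; simp at h; omega
    have hlen_m : m.length = 3*2^n - 1 := by
      have h := hB; rw [sB] at h; simp at h; omega
    by_cases hiL : i < 3*2^n
    · -- lower-half shift
      set k := 3*2^n - i with hk
      have hik : i + k = 3*2^n := by omega
      obtain ⟨q1, q2, q3, q4, q5, q6, q7, q8⟩ := ih i hiL
      have Mtake : (Mw n).take i = (Aw n).take i := by
        rw [sM, sA, List.take_append_of_le_length (by omega),
          List.take_append_of_le_length (by omega)]
      have Ptake : (Pw n).take i = (Bw n).take i := by
        rw [sP, sB, List.take_append_of_le_length (by omega),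
          List.take_append_of_le_length (by omega)]
      have dB' : (Bw (n+1)).drop i = (Bw n).drop i ++ Mw n := by
        rw [BwS]; exact List.drop_append_of_le_length (by omega)
      have dA' : (Aw (n+1)).drop i = (Aw n).drop i ++ Pw n := by
        rw [AwS]; exact List.drop_append_of_le_length (by omega)
      have dM' : (Mw (n+1)).drop i = (Aw n).drop i ++ Bw n := by
        rw [MwS]; exact List.drop_append_of_le_length (by omega)
      have dP' : (Pw (n+1)).drop i = (Bw n).drop i ++ Aw n := by
        rw [PwS]; exact List.drop_append_of_le_length (by omega)
      have tA' : (Aw (n+1)).take (3*2^(n+1) - i) = Aw n ++ (Pw n).take k := by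
        rw [AwS, show 3*2^(n+1) - i = (Aw n).length + k by omega, List.take_length_add_append]
      have tB' : (Bw (n+1)).take (3*2^(n+1) - i) = Bw n ++ (Mw n).take k := by
        rw [BwS, show 3*2^(n+1) - i = (Bw n).length + k by omega, List.take_length_add_append]
      have tA'' : (Aw n).take k ++ ((Aw n).drop k ++ (Pw n).take k)
          = (Aw (n+1)).take (3*2^(n+1) - i) := by
        rw [tA', ← List.append_assoc, List.take_append_drop]
      have tB'' : (Bw n).take k ++ ((Bw n).drop k ++ (Mw n).take k)
          = (Bw (n+1)).take (3*2^(n+1) - i) := by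
        rw [tB', ← List.append_assoc, List.take_append_drop]
      have lenBdrop : ((Bw n).drop i).length = k := by simp [hB, hk]
      have lenAdrop : ((Aw n).drop i).length = k := by simp [hA, hk]
      have lenBtake : ((Bw n).take k).length = k := by simp [hB]; omega
      have lenAtake : ((Aw n).take k).length = k := by simp [hA]; omega
      refine ⟨?_, ?_, ?_, ?_, ?_, ?_, ?_, ?_⟩
      · -- Q1'
        rw [dB', ← tA'']
        exact lex_append_of_lex q1 (lenBdrop.trans lenAtake.symm)
      · -- Q2'
        rcases Nat.eq_zero_or_pos i with rfl | hi1
        · right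
          rw [List.drop_zero, Nat.sub_zero,
            List.take_of_length_le (le_of_eq (lengths (n+1)).2.1)]
        · have hkL : k < 3*2^n := by omega
          obtain ⟨q1k, q2k, q3k, q4k, -, -, -, -⟩ := ih k hkL
          rw [show 3*2^n - k = i by omega] at q1k q2k q3k q4k
          rw [dB', ← tB'']
          refine le_append (lenBtake.trans lenBdrop.symm) q2 (Or.inl ?_)
          conv_rhs => rw [← List.take_append_drop i (Mw n)]
          refine lex_append_of_lex ?_ ?_
          · rw [Mtake]; exact q1k
          · simp [hB, hM]; omega
      · -- Q3'
        rcases Nat.eq_zero_or_pos i with rfl | hi1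
        · right
          rw [List.drop_zero, Nat.sub_zero,
            List.take_of_length_le (le_of_eq (lengths (n+1)).1)]
        · have hkL : k < 3*2^n := by omega
          obtain ⟨q1k, q2k, q3k, q4k, -, -, -, -⟩ := ih k hkL
          rw [show 3*2^n - k = i by omega] at q1k q2k q3k q4k
          rw [dA', ← tA'']
          refine le_append (lenAdrop.trans lenAtake.symm) q3 (Or.inl ?_)
          conv_lhs => rw [← List.take_append_drop i (Pw n)]
          refine lex_append_of_lex ?_ ?_
          · rw [Ptake]; exact q4k
          · simp [hP, hA]; omega
      · -- Q4'
        rw [← tB'', dA']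
        exact lex_append_of_lex q4 (lenBtake.trans lenAdrop.symm)
      · -- Q5'
        rcases Nat.eq_zero_or_pos i with rfl | hi1
        · rw [List.drop_zero, Nat.sub_zero,
            List.take_of_length_le (le_of_eq (lengths (n+1)).1), AwS, MwS]
          exact lex_append_left _ ltBP
        · have hkL : k < 3*2^n := by omega
          obtain ⟨q1k, q2k, q3k, q4k, -, -, -, -⟩ := ih k hkL
          rw [show 3*2^n - k = i by omega] at q1k q2k q3k q4k
          rw [dM', ← tA'']
          refine lt_of_le_append_lt (lenAdrop.trans lenAtake.symm) q3 ?_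
          conv_lhs => rw [← List.take_append_drop i (Bw n)]
          refine lex_append_of_lex q4k ?_
          simp [hB, hA]; omega
      · -- Q6'
        rw [← tB'', dM']
        exact Or.inl (lex_append_of_lex q4 (lenBtake.trans lenAdrop.symm))
      · -- Q7'
        rw [dP', ← tA'']
        exact Or.inl (lex_append_of_lex q1 (lenBdrop.trans lenAtake.symm))
      · -- Q8'
        rcases Nat.eq_zero_or_pos i with rfl | hi1
        · rw [List.drop_zero, Nat.sub_zero,
            List.take_of_length_le (le_of_eq (lengths (n+1)).2.1), BwS, PwS]
          exact lex_append_left _ ltMA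
        · have hkL : k < 3*2^n := by omega
          obtain ⟨q1k, q2k, q3k, q4k, -, -, -, -⟩ := ih k hkL
          rw [show 3*2^n - k = i by omega] at q1k q2k q3k q4k
          rw [← tB'', dP']
          refine lt_of_le_append_lt (lenBtake.trans lenBdrop.symm) q2 ?_
          conv_rhs => rw [← List.take_append_drop i (Aw n)]
          refine lex_append_of_lex q1k ?_
          simp [hB, hA]; omega
    · -- upper-half shift
      set j := i - 3*2^n with hj
      have hjL : j < 3*2^n := by omega
      obtain ⟨q1, q2, q3, q4, q5, q6, q7, q8⟩ := ih j hjL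
      have eDB : (Bw (n+1)).drop i = (Mw n).drop j := by
        rw [BwS, show i = (Bw n).length + j by omega, List.drop_length_add_append]
      have eDA : (Aw (n+1)).drop i = (Pw n).drop j := by
        rw [AwS, show i = (Aw n).length + j by omega, List.drop_length_add_append]
      have eDM : (Mw (n+1)).drop i = (Bw n).drop j := by
        rw [MwS, show i = (Aw n).length + j by omega, List.drop_length_add_append]
      have eDP : (Pw (n+1)).drop i = (Aw n).drop j := by
        rw [PwS, show i = (Bw n).length + j by omega, List.drop_length_add_append]
      have eTA : (Aw (n+1)).take (3*2^(n+1) - i) = (Aw n).take (3*2^n - j) := by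
        rw [AwS, show 3*2^(n+1) - i = 3*2^n - j by omega]
        exact List.take_append_of_le_length (by omega)
      have eTB : (Bw (n+1)).take (3*2^(n+1) - i) = (Bw n).take (3*2^n - j) := by
        rw [BwS, show 3*2^(n+1) - i = 3*2^n - j by omega]
        exact List.take_append_of_le_length (by omega)
      exact ⟨by rw [eDB, eTA]; exact q5, by rw [eDB, eTB]; exact q6,
        by rw [eDA, eTA]; exact q7, by rw [eDA, eTB]; exact q8,
        by rw [eDM, eTA]; exact q1, by rw [eDM, eTB]; exact q2,
        by rw [eDP, eTA]; exact q3, by rw [eDP, eTB]; exact q4⟩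

end TMAux
namespace TMAux

lemma lex_map {u v : List ℕ} (N : ℕ) (h : List.Lex (·<·) u v) :
    List.Lex (·<·) (u.map (·+N)) (v.map (·+N)) := by
  induction h with
  | nil => exact List.Lex.nil
  | cons h ih => exact List.Lex.cons ih
  | rel h => exact List.Lex.rel (by simpa using h)

section Tau
variable (τ : ℕ → ℕ) (hτ0 : τ 0 = 0) (hτe : ∀ i, τ (2 * i) = τ i)
  (hτo : ∀ i, τ (2 * i + 1) = 1 - τ i)

/-- 0-indexed bits of the λ word. -/
def bA (j : ℕ) : ℕ :=
  if j % 3 = 0 then 1 - τ (j/3) else if j % 3 = 1 then 0 else τ (j/3 + 1)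

/-- 0-indexed bits of the λ̂ word. -/
def bB (j : ℕ) : ℕ :=
  if j % 3 = 0 then τ (j/3) else if j % 3 = 1 then 0 else 1 - τ (j/3 + 1)

include hτ0 hτe hτo

lemma tau_le_one : ∀ i, τ i ≤ 1 := by
  intro i
  induction i using Nat.strong_induction_on with
  | _ i ih =>
    rcases Nat.even_or_odd i with ⟨k, hk⟩ | ⟨k, hk⟩
    · rcases Nat.eq_zero_or_pos i with rfl | hpos
      · omega
      · rw [hk, show k + k = 2 * k by ring, hτe]; exact ih k (by omega)
    · rw [hk, hτo]; omega

lemma tau_pow : ∀ nn, τ (2 ^ nn) = 1 := by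
  intro nn
  induction nn with
  | zero => simpa [hτ0] using hτo 0
  | succ nn ih => rw [pow_succ, mul_comm, hτe]; exact ih

lemma tau_add_pow : ∀ nn, ∀ k < 2 ^ nn, τ (2 ^ nn + k) = 1 - τ k := by
  intro nn
  induction nn with
  | zero =>
    intro k hk
    interval_cases k
    simpa [hτ0] using hτo 0
  | succ nn ih =>
    intro k hk
    rcases Nat.even_or_odd k with ⟨j, hj⟩ | ⟨j, hj⟩
    · have e : 2 ^ (nn+1) + k = 2 * (2 ^ nn + j) := by rw [hj]; ring
      rw [e, hτe, ih j (by omega), hj, show j + j = 2 * j by ring, hτe]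
    · have e : 2 ^ (nn+1) + k = 2 * (2 ^ nn + j) + 1 := by rw [hj]; ring
      have hτj := tau_le_one τ hτ0 hτe hτo j
      rw [e, hτo, ih j (by omega), hj, hτo]

lemma bridge : ∀ n, ∀ j < 3 * 2 ^ n,
    (Aw n).getD j 0 = bA τ j ∧ (Bw n).getD j 0 = bB τ j := by
  intro n
  induction n with
  | zero =>
    intro j hj
    have hτ1 : τ 1 = 1 := by simpa [hτ0] using hτo 0
    interval_cases j <;>
      simp [Aw, Bw, bA, bB, hτ0, hτ1]
  | succ n ih =>
    intro j hj
    obtain ⟨hA, hB, hM, hP⟩ := lengths n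
    obtain ⟨l, m, sA, sM, sP, sB⟩ := struct n
    have hpow : 3*2^(n+1) = 3*2^n + 3*2^n := by ring
    have hlen_l : l.length = 3*2^n - 1 := by
      have h := hA; rw [sA] at h; simp at h; omega
    have hlen_m : m.length = 3*2^n - 1 := by
      have h := hB; rw [sB] at h; simp at h; omega
    have AwS : Aw (n+1) = Aw n ++ Pw n := by rw [Aw]
    have BwS : Bw (n+1) = Bw n ++ Mw n := by rw [Bw]
    by_cases hjL : j < 3*2^n
    · rw [AwS, BwS, List.getD_append _ _ _ _ (by omega),
        List.getD_append _ _ _ _ (by omega)]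
      exact ih j hjL
    · -- upper half
      set t := j - 3*2^n with ht
      have htL : t < 3*2^n := by omega
      have h3 : (3:ℕ) ∣ 3*2^n := ⟨2^n, rfl⟩
      have hmod : j % 3 = t % 3 := by omega
      have hdiv : j / 3 = 2^n + t / 3 := by omega
      have hτt3 := tau_le_one τ hτ0 hτe hτo (t/3)
      have hτt3' := tau_le_one τ hτ0 hτe hτo (t/3 + 1)
      have eA : (Aw (n+1)).getD j 0 = (Pw n).getD t 0 := by
        rw [AwS, List.getD_append_right _ _ _ _ (by omega), hA, ht]
      have eB : (Bw (n+1)).getD j 0 = (Mw n).getD t 0 := by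
        rw [BwS, List.getD_append_right _ _ _ _ (by omega), hB, ht]
      by_cases hlast : t = 3*2^n - 1
      · -- last position of the half
        have eP : (Pw n).getD t 0 = 1 := by
          rw [sP, List.getD_append_right _ _ _ _ (by omega), hlen_m]
          simp [hlast]
        have eM : (Mw n).getD t 0 = 0 := by
          rw [sM, List.getD_append_right _ _ _ _ (by omega), hlen_l]
          simp [hlast]
        have hmod2 : t % 3 = 2 := by omega
        have hdiv2 : t / 3 + 1 = 2^n := by omega
        have e2 : 2^n + t/3 + 1 = 2^(n+1) := by
          rw [pow_succ]; omega
        constructor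
        · rw [eA, eP]
          rw [bA, if_neg (by omega), if_neg (by omega), hdiv, e2,
            tau_pow τ hτ0 hτe hτo]
        · rw [eB, eM]
          rw [bB, if_neg (by omega), if_neg (by omega), hdiv, e2,
            tau_pow τ hτ0 hτe hτo]
      · -- interior: bits come from the level-n words
        have hPB : (Pw n).getD t 0 = (Bw n).getD t 0 := by
          rw [sP, sB, List.getD_append _ _ _ _ (by omega),
            List.getD_append _ _ _ _ (by omega)]
        have hMA : (Mw n).getD t 0 = (Aw n).getD t 0 := by
          rw [sM, sA, List.getD_append _ _ _ _ (by omega),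
            List.getD_append _ _ _ _ (by omega)]
        obtain ⟨ihA, ihB⟩ := ih t htL
        have hadd : ∀ k < 2^n, τ (2^n + k) = 1 - τ k :=
          tau_add_pow τ hτ0 hτe hτo n
        constructor
        · rw [eA, hPB, ihB, bA, bB, hmod, hdiv]
          rcases (by omega : t % 3 = 0 ∨ t % 3 = 1 ∨ t % 3 = 2) with h0 | h0 | h0 <;>
            simp only [h0] <;> norm_num
          · rw [hadd (t/3) (by omega)]; omega
          · rw [show 2^n + t/3 + 1 = 2^n + (t/3+1) by ring, hadd (t/3+1) (by omega)]
        · rw [eB, hMA, ihA, bA, bB, hmod, hdiv]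
          rcases (by omega : t % 3 = 0 ∨ t % 3 = 1 ∨ t % 3 = 2) with h0 | h0 | h0 <;>
            simp only [h0] <;> norm_num
          · rw [hadd (t/3) (by omega)]
          · rw [show 2^n + t/3 + 1 = 2^n + (t/3+1) by ring, hadd (t/3+1) (by omega)]
            omega

end Tau

end TMAux
/-- λ̂₁⋯λ̂_{3·2ⁿ−i} ≼ λ̂_{i+1}⋯λ̂_{3·2ⁿ} ≺ λ₁⋯λ_{3·2ⁿ−i}. -/
theorem lambda_hat_lex_inequalities (N : ℕ) (τ : ℕ → ℕ)
    (hτ0 : τ 0 = 0) (hτe : ∀ i, τ (2 * i) = τ i) (hτo : ∀ i, τ (2 * i + 1) = 1 - τ i)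
    (lam lamh : ℕ → ℕ)
    (h1 : ∀ k, lam (3 * k + 1) = τ (2 * k + 1) + N)
    (h2 : ∀ k, lam (3 * k + 2) = N)
    (h3 : ∀ k, lam (3 * k + 3) = τ (2 * k + 2) + N)
    (g1 : ∀ k, lamh (3 * k + 1) = 1 - τ (2 * k + 1) + N)
    (g2 : ∀ k, lamh (3 * k + 2) = N)
    (g3 : ∀ k, lamh (3 * k + 3) = 1 - τ (2 * k + 2) + N)
    (n i : ℕ) (hi : i < 3 * 2 ^ n) :
    (List.Lex (· < ·)
        (List.ofFn (fun t : Fin (3 * 2 ^ n - i) => lamh ((t : ℕ) + 1)))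
        (List.ofFn (fun t : Fin (3 * 2 ^ n - i) => lamh (i + (t : ℕ) + 1))) ∨
      (List.ofFn (fun t : Fin (3 * 2 ^ n - i) => lamh ((t : ℕ) + 1))) =
        (List.ofFn (fun t : Fin (3 * 2 ^ n - i) => lamh (i + (t : ℕ) + 1)))) ∧
      List.Lex (· < ·)
        (List.ofFn (fun t : Fin (3 * 2 ^ n - i) => lamh (i + (t : ℕ) + 1)))
        (List.ofFn (fun t : Fin (3 * 2 ^ n - i) => lam ((t : ℕ) + 1))) := by
  obtain ⟨hA, hB, hM, hP⟩ := TMAux.lengths n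
  obtain ⟨q1, q2, -, -, -, -, -, -⟩ := TMAux.invariant n i hi
  have brid := TMAux.bridge τ hτ0 hτe hτo n
  have lamh_eq : ∀ j : ℕ, lamh (j + 1) = TMAux.bB τ j + N := by
    intro j
    have hτle := TMAux.tau_le_one τ hτ0 hτe hτo (j / 3)
    rcases (by omega : j % 3 = 0 ∨ j % 3 = 1 ∨ j % 3 = 2) with h0 | h0 | h0
    · rw [show j + 1 = 3 * (j / 3) + 1 by omega, g1, hτo, TMAux.bB, if_pos h0]
      omega
    · rw [show j + 1 = 3 * (j / 3) + 2 by omega, g2, TMAux.bB,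
        if_neg (by omega), if_pos h0]
      omega
    · rw [show j + 1 = 3 * (j / 3) + 3 by omega, g3,
        show 2 * (j / 3) + 2 = 2 * (j / 3 + 1) by ring, hτe, TMAux.bB,
        if_neg (by omega), if_neg (by omega)]
  have lam_eq : ∀ j : ℕ, lam (j + 1) = TMAux.bA τ j + N := by
    intro j
    rcases (by omega : j % 3 = 0 ∨ j % 3 = 1 ∨ j % 3 = 2) with h0 | h0 | h0
    · rw [show j + 1 = 3 * (j / 3) + 1 by omega, h1, hτo, TMAux.bA, if_pos h0]
    · rw [show j + 1 = 3 * (j / 3) + 2 by omega, h2, TMAux.bA,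
        if_neg (by omega), if_pos h0]
      omega
    · rw [show j + 1 = 3 * (j / 3) + 3 by omega, h3,
        show 2 * (j / 3) + 2 = 2 * (j / 3 + 1) by ring, hτe, TMAux.bA,
        if_neg (by omega), if_neg (by omega)]
  have e1 : List.ofFn (fun t : Fin (3 * 2 ^ n - i) => lamh ((t : ℕ) + 1))
      = ((TMAux.Bw n).take (3 * 2 ^ n - i)).map (· + N) := by
    refine List.ext_getElem ?_ ?_
    · simp only [List.length_ofFn, List.length_map, List.length_take, hB]
      omega
    · intro t h₁ h₂
      simp only [List.length_ofFn] at h₁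
      simp only [List.getElem_ofFn, List.getElem_map, List.getElem_take]
      rw [lamh_eq]
      congr 1
      have hbb := (brid t (by omega)).2
      rw [List.getD_eq_getElem _ _ (by omega)] at hbb
      exact hbb.symm
  have e2 : List.ofFn (fun t : Fin (3 * 2 ^ n - i) => lamh (i + (t : ℕ) + 1))
      = ((TMAux.Bw n).drop i).map (· + N) := by
    refine List.ext_getElem ?_ ?_
    · simp only [List.length_ofFn, List.length_map, List.length_drop, hB]
    · intro t h₁ h₂
      simp only [List.length_ofFn] at h₁
      simp only [List.getElem_ofFn, List.getElem_map, List.getElem_drop]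
      rw [lamh_eq (i + t)]
      congr 1
      have hbb := (brid (i + t) (by omega)).2
      rw [List.getD_eq_getElem _ _ (by omega)] at hbb
      exact hbb.symm
  have e3 : List.ofFn (fun t : Fin (3 * 2 ^ n - i) => lam ((t : ℕ) + 1))
      = ((TMAux.Aw n).take (3 * 2 ^ n - i)).map (· + N) := by
    refine List.ext_getElem ?_ ?_
    · simp only [List.length_ofFn, List.length_map, List.length_take, hA]
      omega
    · intro t h₁ h₂
      simp only [List.length_ofFn] at h₁
      simp only [List.getElem_ofFn, List.getElem_map, List.getElem_take]
      rw [lam_eq]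
      congr 1
      have hbb := (brid t (by omega)).1
      rw [List.getD_eq_getElem _ _ (by omega)] at hbb
      exact hbb.symm
  constructor
  · rcases q2 with hlt | heq
    · exact Or.inl (by rw [e1, e2]; exact TMAux.lex_map N hlt)
    · exact Or.inr (by rw [e1, e2, heq])
  · rw [e2, e3]
    exact TMAux.lex_map N q1
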